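/- Let k ≥ 1 be an integer, let I ⊆ ℝ be an interval of length < π, and let f : I → [0,∞). Define F on the cone C_I = {(r cos θ, r sin θ) : r > 0, θ ∈ I} by F(r cos θ, r sin θ) = r·f(θ)^{1/k}. Then F is concave on C_I if and only if for all x₁, x₂ ∈ I with x₁ ≠ x₂ and all α ∈ (0,1): f(αx₁ + (1−α)x₂)^{1/k} ≥ (sin(α|x₂−x₁|)/sin(|x₂−x₁|))·f(x₁)^{1/k} + (sin((1−α)|x₂−x₁|)/sin(|x₂−x₁|))·f(x₂)^{1/k}. -/

import Mathlib

open MeasureTheory Real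


private lemma aux_cos (a b β : ℝ) :
    sin a * cos (β - b) + sin b * cos (β + a) = sin (a + b) * cos β := by
  simp [sin_add, cos_add, cos_sub]; ring

private lemma aux_sin (a b β : ℝ) :
    sin a * sin (β - b) + sin b * sin (β + a) = sin (a + b) * sin β := by
  simp [sin_add, sin_sub]; ring

private lemma trig_cos (x₁ x₂ α : ℝ) :
    sin (α * (x₂ - x₁)) * cos x₁ + sin ((1 - α) * (x₂ - x₁)) * cos x₂
      = sin (x₂ - x₁) * cos (α * x₁ + (1 - α) * x₂) := by
  have h := aux_cos (α * (x₂ - x₁)) ((1 - α) * (x₂ - x₁)) (α * x₁ + (1 - α) * x₂)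
  rw [show α * x₁ + (1 - α) * x₂ - (1 - α) * (x₂ - x₁) = x₁ by ring,
    show α * x₁ + (1 - α) * x₂ + α * (x₂ - x₁) = x₂ by ring,
    show α * (x₂ - x₁) + (1 - α) * (x₂ - x₁) = x₂ - x₁ by ring] at h
  exact h

private lemma trig_sin (x₁ x₂ α : ℝ) :
    sin (α * (x₂ - x₁)) * sin x₁ + sin ((1 - α) * (x₂ - x₁)) * sin x₂
      = sin (x₂ - x₁) * sin (α * x₁ + (1 - α) * x₂) := by
  have h := aux_sin (α * (x₂ - x₁)) ((1 - α) * (x₂ - x₁)) (α * x₁ + (1 - α) * x₂)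
  rw [show α * x₁ + (1 - α) * x₂ - (1 - α) * (x₂ - x₁) = x₁ by ring,
    show α * x₁ + (1 - α) * x₂ + α * (x₂ - x₁) = x₂ by ring,
    show α * (x₂ - x₁) + (1 - α) * (x₂ - x₁) = x₂ - x₁ by ring] at h
  exact h

private lemma trig_cos_abs (x₁ x₂ α : ℝ) :
    sin (α * |x₂ - x₁|) * cos x₁ + sin ((1 - α) * |x₂ - x₁|) * cos x₂
      = sin |x₂ - x₁| * cos (α * x₁ + (1 - α) * x₂) := by
  rcases le_total x₁ x₂ with h | h
  · rw [abs_of_nonneg (by linarith : (0:ℝ) ≤ x₂ - x₁)]; exact trig_cos x₁ x₂ α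
  · rw [abs_of_nonpos (by linarith : x₂ - x₁ ≤ 0),
      show α * -(x₂ - x₁) = -(α * (x₂ - x₁)) by ring, sin_neg,
      show (1 - α) * -(x₂ - x₁) = -((1 - α) * (x₂ - x₁)) by ring, sin_neg, sin_neg]
    linarith [trig_cos x₁ x₂ α]

private lemma trig_sin_abs (x₁ x₂ α : ℝ) :
    sin (α * |x₂ - x₁|) * sin x₁ + sin ((1 - α) * |x₂ - x₁|) * sin x₂
      = sin |x₂ - x₁| * sin (α * x₁ + (1 - α) * x₂) := by
  rcases le_total x₁ x₂ with h | h
  · rw [abs_of_nonneg (by linarith : (0:ℝ) ≤ x₂ - x₁)]; exact trig_sin x₁ x₂ α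
  · rw [abs_of_nonpos (by linarith : x₂ - x₁ ≤ 0),
      show α * -(x₂ - x₁) = -(α * (x₂ - x₁)) by ring, sin_neg,
      show (1 - α) * -(x₂ - x₁) = -((1 - α) * (x₂ - x₁)) by ring, sin_neg, sin_neg]
    linarith [trig_sin x₁ x₂ α]

private lemma step (I : Set ℝ) (hIconv : Convex ℝ I)
    (hIlen : ∀ x ∈ I, ∀ y ∈ I, |x - y| < Real.pi)
    (g : ℝ → ℝ)
    (H : ∀ x₁ ∈ I, ∀ x₂ ∈ I, x₁ ≠ x₂ → ∀ α : ℝ, 0 < α → α < 1 →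
      (sin (α * |x₂ - x₁|) / sin |x₂ - x₁|) * g x₁ +
        (sin ((1 - α) * |x₂ - x₁|) / sin |x₂ - x₁|) * g x₂
        ≤ g (α * x₁ + (1 - α) * x₂))
    {x₁ x₂ : ℝ} (hx₁ : x₁ ∈ I) (hx₂ : x₂ ∈ I) (hlt : x₁ < x₂)
    {c d : ℝ} (hc : 0 < c) (hd : 0 < d) :
    ∃ r, 0 < r ∧ ∃ θ ∈ I, c * cos x₁ + d * cos x₂ = r * cos θ ∧
      c * sin x₁ + d * sin x₂ = r * sin θ ∧
      c * g x₁ + d * g x₂ ≤ r * g θ := by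
  have hδ0 : 0 < x₂ - x₁ := by linarith
  have hδπ : x₂ - x₁ < π := by
    have h := hIlen x₂ hx₂ x₁ hx₁
    rwa [abs_of_pos hδ0] at h
  have hs : 0 < sin (x₂ - x₁) := sin_pos_of_pos_of_lt_pi hδ0 hδπ
  -- IVT to find α
  obtain ⟨α, hαmem, hφ⟩ :
      ∃ α ∈ Set.Ioo (0:ℝ) 1, sin (α * (x₂ - x₁)) * d - sin ((1 - α) * (x₂ - x₁)) * c = 0 := by
    have hcont : ContinuousOn
        (fun α : ℝ => sin (α * (x₂ - x₁)) * d - sin ((1 - α) * (x₂ - x₁)) * c)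
        (Set.Icc 0 1) := by fun_prop
    have hsub := intermediate_value_Ioo (le_of_lt one_pos) hcont
    have h0 : (0:ℝ) ∈ Set.Ioo
        ((fun α : ℝ => sin (α * (x₂ - x₁)) * d - sin ((1 - α) * (x₂ - x₁)) * c) 0)
        ((fun α : ℝ => sin (α * (x₂ - x₁)) * d - sin ((1 - α) * (x₂ - x₁)) * c) 1) := by
      constructor <;> simp <;> positivity
    obtain ⟨α, hα, hval⟩ := hsub h0
    exact ⟨α, hα, hval⟩
  obtain ⟨hα0, hα1⟩ := hαmem
  have ha : 0 < sin (α * (x₂ - x₁)) := by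
    apply sin_pos_of_pos_of_lt_pi (mul_pos hα0 hδ0)
    nlinarith
  have hb : 0 < sin ((1 - α) * (x₂ - x₁)) := by
    apply sin_pos_of_pos_of_lt_pi (mul_pos (by linarith) hδ0)
    nlinarith
  set t : ℝ := c / sin (α * (x₂ - x₁)) with ht_def
  have ht : 0 < t := div_pos hc ha
  have hc' : c = t * sin (α * (x₂ - x₁)) := by
    rw [ht_def, div_mul_cancel₀ c ha.ne']
  have hd' : d = t * sin ((1 - α) * (x₂ - x₁)) := by
    rw [ht_def]
    rw [div_mul_eq_mul_div, eq_div_iff ha.ne']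
    linear_combination hφ
  refine ⟨t * sin (x₂ - x₁), mul_pos ht hs, α * x₁ + (1 - α) * x₂,
    hIconv hx₁ hx₂ hα0.le (by linarith) (by ring), ?_, ?_, ?_⟩
  · rw [hc', hd']
    linear_combination t * trig_cos x₁ x₂ α
  · rw [hc', hd']
    linear_combination t * trig_sin x₁ x₂ α
  · have key := H x₁ hx₁ x₂ hx₂ (ne_of_lt hlt) α hα0 hα1
    rw [show |x₂ - x₁| = x₂ - x₁ from abs_of_pos hδ0] at key
    have h2 := mul_le_mul_of_nonneg_left key (le_of_lt (mul_pos ht hs))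
    calc c * g x₁ + d * g x₂
        = (t * sin (x₂ - x₁)) *
            ((sin (α * (x₂ - x₁)) / sin (x₂ - x₁)) * g x₁ +
             (sin ((1 - α) * (x₂ - x₁)) / sin (x₂ - x₁)) * g x₂) := by
          rw [hc', hd']; field_simp
      _ ≤ (t * sin (x₂ - x₁)) * g (α * x₁ + (1 - α) * x₂) := h2

private lemma combo_mem (I : Set ℝ) (hIconv : Convex ℝ I)
    (hIlen : ∀ x ∈ I, ∀ y ∈ I, |x - y| < Real.pi)
    (g : ℝ → ℝ)
    (H : ∀ x₁ ∈ I, ∀ x₂ ∈ I, x₁ ≠ x₂ → ∀ α : ℝ, 0 < α → α < 1 →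
      (sin (α * |x₂ - x₁|) / sin |x₂ - x₁|) * g x₁ +
        (sin ((1 - α) * |x₂ - x₁|) / sin |x₂ - x₁|) * g x₂
        ≤ g (α * x₁ + (1 - α) * x₂))
    {r₁ r₂ : ℝ} (hr₁ : 0 < r₁) (hr₂ : 0 < r₂)
    {x₁ x₂ : ℝ} (hx₁ : x₁ ∈ I) (hx₂ : x₂ ∈ I)
    {a b : ℝ} (ha : 0 ≤ a) (hb : 0 ≤ b) (hab : a + b = 1) :
    ∃ r, 0 < r ∧ ∃ θ ∈ I,
      a • ((r₁ * cos x₁, r₁ * sin x₁) : ℝ × ℝ) + b • ((r₂ * cos x₂, r₂ * sin x₂) : ℝ × ℝ)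
        = (r * cos θ, r * sin θ) ∧
      a * (r₁ * g x₁) + b * (r₂ * g x₂) ≤ r * g θ := by
  rcases eq_or_lt_of_le ha with rfl | ha'
  · have hb1 : b = 1 := by linarith
    subst hb1
    exact ⟨r₂, hr₂, x₂, hx₂, by simp, by simp⟩
  rcases eq_or_lt_of_le hb with rfl | hb'
  · have ha1 : a = 1 := by linarith
    subst ha1
    exact ⟨r₁, hr₁, x₁, hx₁, by simp, by simp⟩
  have hc : 0 < a * r₁ := mul_pos ha' hr₁
  have hd : 0 < b * r₂ := mul_pos hb' hr₂
  rcases lt_trichotomy x₁ x₂ with hlt | heq | hgt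
  · obtain ⟨r, hr, θ, hθ, hcos, hsin, hineq⟩ :=
      step I hIconv hIlen g H hx₁ hx₂ hlt hc hd
    refine ⟨r, hr, θ, hθ, ?_, ?_⟩
    · apply Prod.ext <;> simp [Prod.smul_mk] <;>
        [linear_combination hcos; linear_combination hsin]
    · refine le_trans (le_of_eq ?_) hineq; ring
  · subst heq
    refine ⟨a * r₁ + b * r₂, by linarith, x₁, hx₁, ?_, ?_⟩
    · apply Prod.ext <;> simp [Prod.smul_mk] <;> ring
    · apply le_of_eq; ring
  · obtain ⟨r, hr, θ, hθ, hcos, hsin, hineq⟩ :=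
      step I hIconv hIlen g H hx₂ hx₁ hgt hd hc
    refine ⟨r, hr, θ, hθ, ?_, ?_⟩
    · apply Prod.ext <;> simp [Prod.smul_mk] <;>
        [linear_combination hcos; linear_combination hsin]
    · refine le_trans (le_of_eq ?_) hineq; ring

/-- Characterisation of `sin^k`-concavity: for `f : I → [0,∞)` on an interval `I` of
length `< π`, the 1-homogeneous extension `F(r cos θ, r sin θ) = r·f(θ)^(1/k)` is concave
on the cone over `I` iff `f` satisfies the `sin^k`-concavity inequality. -/
theorem sinPow_concave_iff (k : ℕ) (hk : 1 ≤ k)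
    (I : Set ℝ) (hIconv : Convex ℝ I)
    (hIlen : ∀ x ∈ I, ∀ y ∈ I, |x - y| < Real.pi)
    (f : ℝ → ℝ) (hf : ∀ x ∈ I, 0 ≤ f x)
    (F : ℝ × ℝ → ℝ)
    (hF : ∀ r : ℝ, 0 < r → ∀ θ ∈ I,
      F (r * Real.cos θ, r * Real.sin θ) = r * f θ ^ (1 / (k : ℝ))) :
    ConcaveOn ℝ
        {p : ℝ × ℝ | ∃ r : ℝ, 0 < r ∧ ∃ θ ∈ I, p = (r * Real.cos θ, r * Real.sin θ)}
        F ↔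
      ∀ x₁ ∈ I, ∀ x₂ ∈ I, x₁ ≠ x₂ → ∀ α : ℝ, 0 < α → α < 1 →
        (Real.sin (α * |x₂ - x₁|) / Real.sin |x₂ - x₁|) * f x₁ ^ (1 / (k : ℝ)) +
            (Real.sin ((1 - α) * |x₂ - x₁|) / Real.sin |x₂ - x₁|) * f x₂ ^ (1 / (k : ℝ))
          ≤ f (α * x₁ + (1 - α) * x₂) ^ (1 / (k : ℝ)) := by
  constructor
  · intro hconc x₁ hx₁ x₂ hx₂ hne α hα0 hα1
    have hδ0 : 0 < |x₂ - x₁| := abs_pos.mpr (sub_ne_zero.mpr (Ne.symm hne))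
    have hδπ : |x₂ - x₁| < π := hIlen x₂ hx₂ x₁ hx₁
    have hs : 0 < sin |x₂ - x₁| := sin_pos_of_pos_of_lt_pi hδ0 hδπ
    have hA : 0 < sin (α * |x₂ - x₁|) := by
      apply sin_pos_of_pos_of_lt_pi (mul_pos hα0 hδ0); nlinarith
    have hB : 0 < sin ((1 - α) * |x₂ - x₁|) := by
      apply sin_pos_of_pos_of_lt_pi (mul_pos (by linarith) hδ0); nlinarith
    set A := sin (α * |x₂ - x₁|)
    set B := sin ((1 - α) * |x₂ - x₁|)
    have hAB : 0 < A + B := by linarith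
    have hp₁ : ((1 * cos x₁, 1 * sin x₁) : ℝ × ℝ) ∈
        {p : ℝ × ℝ | ∃ r : ℝ, 0 < r ∧ ∃ θ ∈ I, p = (r * cos θ, r * sin θ)} :=
      ⟨1, one_pos, x₁, hx₁, rfl⟩
    have hp₂ : ((1 * cos x₂, 1 * sin x₂) : ℝ × ℝ) ∈
        {p : ℝ × ℝ | ∃ r : ℝ, 0 < r ∧ ∃ θ ∈ I, p = (r * cos θ, r * sin θ)} :=
      ⟨1, one_pos, x₂, hx₂, rfl⟩
    have hsum : A / (A + B) + B / (A + B) = 1 := by field_simp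
    have hconc2 := hconc.2 hp₁ hp₂ (le_of_lt (div_pos hA hAB))
      (le_of_lt (div_pos hB hAB)) hsum
    set β := α * x₁ + (1 - α) * x₂ with hβ
    have hβI : β ∈ I := hIconv hx₁ hx₂ hα0.le (by linarith) (by ring)
    have hpt : (A / (A + B)) • ((1 * cos x₁, 1 * sin x₁) : ℝ × ℝ) +
        (B / (A + B)) • ((1 * cos x₂, 1 * sin x₂) : ℝ × ℝ)
        = ((sin |x₂ - x₁| / (A + B)) * cos β, (sin |x₂ - x₁| / (A + B)) * sin β) := by
      apply Prod.ext <;> simp [Prod.smul_mk] <;> rw [div_mul_eq_mul_div, div_mul_eq_mul_div,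
        ← add_div, div_mul_eq_mul_div, div_eq_div_iff (ne_of_gt hAB) (ne_of_gt hAB)]
      · linear_combination (A + B) * trig_cos_abs x₁ x₂ α
      · linear_combination (A + B) * trig_sin_abs x₁ x₂ α
    rw [hpt] at hconc2
    rw [hF _ (div_pos hs hAB) β hβI, hF 1 one_pos x₁ hx₁, hF 1 one_pos x₂ hx₂] at hconc2
    simp only [one_mul, smul_eq_mul] at hconc2
    have h2 : A * f x₁ ^ (1 / (k : ℝ)) + B * f x₂ ^ (1 / (k : ℝ))
        ≤ sin |x₂ - x₁| * f β ^ (1 / (k : ℝ)) := by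
      rw [div_mul_eq_mul_div, div_mul_eq_mul_div, div_mul_eq_mul_div, ← add_div,
        div_le_div_iff₀ hAB hAB] at hconc2
      have := le_of_mul_le_mul_right hconc2 hAB
      linarith
    rw [div_mul_eq_mul_div, div_mul_eq_mul_div, ← add_div, div_le_iff₀ hs]
    linarith
  · intro H
    set g : ℝ → ℝ := fun θ => f θ ^ (1 / (k : ℝ)) with hg
    have H' : ∀ x₁ ∈ I, ∀ x₂ ∈ I, x₁ ≠ x₂ → ∀ α : ℝ, 0 < α → α < 1 →
        (sin (α * |x₂ - x₁|) / sin |x₂ - x₁|) * g x₁ +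
          (sin ((1 - α) * |x₂ - x₁|) / sin |x₂ - x₁|) * g x₂
          ≤ g (α * x₁ + (1 - α) * x₂) := H
    constructor
    · rintro p ⟨r₁, hr₁, x₁, hx₁, rfl⟩ q ⟨r₂, hr₂, x₂, hx₂, rfl⟩ a b ha hb hab
      obtain ⟨r, hr, θ, hθ, heq, _⟩ :=
        combo_mem I hIconv hIlen g H' hr₁ hr₂ hx₁ hx₂ ha hb hab
      exact ⟨r, hr, θ, hθ, heq⟩
    · rintro p ⟨r₁, hr₁, x₁, hx₁, rfl⟩ q ⟨r₂, hr₂, x₂, hx₂, rfl⟩ a b ha hb hab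
      obtain ⟨r, hr, θ, hθ, heq, hineq⟩ :=
        combo_mem I hIconv hIlen g H' hr₁ hr₂ hx₁ hx₂ ha hb hab
      rw [heq, hF r hr θ hθ, hF r₁ hr₁ x₁ hx₁, hF r₂ hr₂ x₂ hx₂]
      simpa [smul_eq_mul, hg] using hineq
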